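/- Let n_j : ℝ → E (j=1,…,N) be differentiable maps with derivatives ṅ_j such that {n_j(t)} is an orthonormal basis of E for every t, let θ_j : ℝ → ℝ be continuous, and fix an index k. Let Θ_k(t) = ∫₀ᵗ θ_k(ξ) dξ. Then the curve ψ(t) = e^{iΘ_k(t)} n_k(t) satisfies the Schrödinger equation i ψ'(t) = H_SA(t) ψ(t) for all t, with ψ(0) = n_k(0); i.e. the shortcut Hamiltonian drives the system exactly along the instantaneous eigenlevel k without transitions. -/

import Mathlib

/-- The rank-one operator `|u⟩⟨v| : z ↦ ⟪v, z⟫ • u`. -/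
noncomputable def ketBra {E : Type*} [NormedAddCommGroup E] [InnerProductSpace ℂ E]
    (u v : E) : E →L[ℂ] E :=
  (innerSL ℂ v).smulRight u

/-- The shortcut (transitionless) Hamiltonian
`H_SA(t) = i Σ_j ( |ṅ_j(t)⟩⟨n_j(t)| + i θ_j(t) |n_j(t)⟩⟨n_j(t)| )`. -/
noncomputable def HSA {E : Type*} [NormedAddCommGroup E] [InnerProductSpace ℂ E]
    {N : ℕ} (n n' : Fin N → ℝ → E) (θ : Fin N → ℝ → ℝ) (t : ℝ) : E →L[ℂ] E :=
  Complex.I • ∑ j : Fin N,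
    (ketBra (n' j t) (n j t) + (Complex.I * (θ j t : ℂ)) • ketBra (n j t) (n j t))

/-- The shortcut Hamiltonian drives the curve `ψ(t) = e^{iΘ_k(t)} n_k(t)`, with
`Θ_k(t) = ∫₀ᵗ θ_k(ξ) dξ`, exactly along the instantaneous eigenlevel `k`:
`i ψ'(t) = H_SA(t) ψ(t)` and `ψ(0) = n_k(0)`. -/
theorem transitionless_tracking_of_eigenlevel
    {E : Type*} [NormedAddCommGroup E] [InnerProductSpace ℂ E] [FiniteDimensional ℂ E]
    {N : ℕ} (n n' : Fin N → ℝ → E) (θ : Fin N → ℝ → ℝ)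
    (hON : ∀ t : ℝ, Orthonormal ℂ (fun j : Fin N => n j t))
    (hspan : ∀ t : ℝ, Submodule.span ℂ (Set.range (fun j : Fin N => n j t)) = ⊤)
    (hn : ∀ (j : Fin N) (t : ℝ), HasDerivAt (n j) (n' j t) t)
    (hθ : ∀ j : Fin N, Continuous (θ j))
    (k : Fin N) (ψ : ℝ → E)
    (hψ : ∀ t : ℝ,
      ψ t = Complex.exp (Complex.I * ((∫ ξ in (0:ℝ)..t, θ k ξ : ℝ) : ℂ)) • n k t) :
    ψ 0 = n k 0 ∧
      ∀ t : ℝ, ∃ d : E, HasDerivAt ψ d t ∧ Complex.I • d = HSA n n' θ t (ψ t) := by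
  constructor
  · rw [hψ 0]; simp
  · intro t
    set Θ : ℝ → ℝ := fun t => ∫ ξ in (0:ℝ)..t, θ k ξ with hΘdef
    have hΘ : HasDerivAt Θ (θ k t) t :=
      ((hθ k).integral_hasStrictDerivAt 0 t).hasDerivAt
    have hc : HasDerivAt (fun s => Complex.exp (Complex.I * (Θ s : ℂ)))
        (Complex.I * (θ k t : ℂ) * Complex.exp (Complex.I * (Θ t : ℂ))) t := by
      have h1 : HasDerivAt (fun s => Complex.I * (Θ s : ℂ)) (Complex.I * (θ k t : ℂ)) t :=
        (hΘ.ofReal_comp).const_mul Complex.I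
      simpa [mul_comm] using h1.cexp
    set e : ℂ := Complex.exp (Complex.I * (Θ t : ℂ)) with he
    have hd : HasDerivAt ψ (e • n' k t + (Complex.I * (θ k t : ℂ) * e) • n k t) t := by
      have := hc.smul (hn k t)
      refine HasDerivAt.congr_of_eventuallyEq ?_ (by filter_upwards with s using (hψ s))
      exact this
    refine ⟨_, hd, ?_⟩
    -- compute the RHS
    rw [hψ t]
    show _ = HSA n n' θ t (e • n k t)
    have hortho : ∀ j : Fin N, (inner ℂ (n j t) (n k t) : ℂ) = if j = k then 1 else 0 :=
      fun j => orthonormal_iff_ite.mp (hON t) j k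
    have happ : HSA n n' θ t (n k t)
        = Complex.I • (n' k t + (Complex.I * (θ k t : ℂ)) • n k t) := by
      rw [HSA]
      simp only [ContinuousLinearMap.smul_apply, ContinuousLinearMap.sum_apply,
        ContinuousLinearMap.add_apply, ContinuousLinearMap.smul_apply]
      congr 1
      rw [Finset.sum_eq_single k]
      · simp [ketBra, hortho k, (hON t).1 k]
      · intro j _ hj
        simp [ketBra, hortho j, hj]
      · simp
    rw [map_smul, happ, smul_smul]
    simp only [smul_add, smul_smul]
    congr 1
    · rw [mul_comm]
    · congr 1; ring
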